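/- Let Γ be a cancellation monoid with neutral element e and A = ⊕_{γ∈Γ} A_γ a Γ-graded ring whose degree-e part A_e is a local ring in the classical sense. Then the sum 𝔏 of all proper graded left ideals of A is a proper graded left ideal of A; likewise the sum ℜ of all proper graded right ideals of A is a proper graded right ideal of A, and the sum 𝔐 of all proper graded two-sided ideals of A is a proper graded two-sided ideal of A. -/

import Mathlib

section

variable {Γ : Type*} [AddCancelMonoid Γ] [DecidableEq Γ]
variable {A : Type*} [Ring A] (𝒜 : Γ → AddSubgroup A) [GradedRing 𝒜]

/-- A left ideal of `A` is graded if it contains all homogeneous components of each of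
its elements (equivalently, it is generated by homogeneous elements). -/
def Ideal.IsGradedLeft (I : Ideal A) : Prop :=
  ∀ a ∈ I, ∀ γ : Γ, (DirectSum.decompose 𝒜 a γ : A) ∈ I

/-- A right ideal of `A` (a submodule of `A` over `Aᵐᵒᵖ`) is graded if it contains all
homogeneous components of each of its elements. -/
def Ideal.IsGradedRight (I : Submodule Aᵐᵒᵖ A) : Prop :=
  ∀ a ∈ I, ∀ γ : Γ, (DirectSum.decompose 𝒜 a γ : A) ∈ I

/-- A two-sided ideal of `A` is graded if it contains all homogeneous components of each
of its elements. -/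
def TwoSidedIdeal.IsGraded (I : TwoSidedIdeal A) : Prop :=
  ∀ a ∈ I, ∀ γ : Γ, (DirectSum.decompose 𝒜 a γ : A) ∈ I

/-- An auxiliary instance-stable predicate: `x` is a non-unit of the semiring `R`. -/
private def NonUnit {R : Type*} [Semiring R] (x : R) : Prop := ¬ IsUnit x

private lemma nonUnit_zero {R : Type*} [Semiring R] [Nontrivial R] : NonUnit (0 : R) :=
  not_isUnit_zero

private lemma not_nonUnit_one {R : Type*} [Semiring R] : ¬ NonUnit (1 : R) :=
  fun h => h isUnit_one

private lemma exists_two_sided_inv {R : Type*} [Semiring R] {x : R} (h : ¬ NonUnit x) :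
    ∃ y : R, y * x = 1 ∧ x * y = 1 := by
  rw [NonUnit, not_not] at h
  obtain ⟨u, rfl⟩ := h
  exact ⟨↑u⁻¹, u.inv_mul, u.mul_inv⟩

/-- In a (possibly noncommutative) local ring, the sum of two non-units is a non-unit. -/
private lemma nonUnit_add {R : Type*} [Semiring R] [IsLocalRing R] {a b : R}
    (ha : NonUnit a) (hb : NonUnit b) : NonUnit (a + b) := by
  rintro ⟨u, hu⟩
  have h1 : a * ↑u⁻¹ + b * ↑u⁻¹ = 1 := by
    rw [← add_mul, ← hu, u.mul_inv]
  rcases IsLocalRing.isUnit_or_isUnit_of_add_one h1 with h | h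
  · refine ha ?_
    have := h.mul u.isUnit
    rwa [mul_assoc, u.inv_mul, mul_one] at this
  · refine hb ?_
    have := h.mul u.isUnit
    rwa [mul_assoc, u.inv_mul, mul_one] at this

/-- Membership in a `sSup` of two-sided ideals of `R` coincides with membership in the
`sSup` of the corresponding left ideals. -/
private lemma twoSided_mem_sSup {R : Type*} [Ring R] (S : Set (TwoSidedIdeal R)) {x : R} :
    x ∈ sSup S ↔ x ∈ sSup (TwoSidedIdeal.asIdeal '' S) := by
  set K : Ideal R := sSup (TwoSidedIdeal.asIdeal '' S) with hK
  have key : ∀ y : R, y ∈ (⨆ I : (TwoSidedIdeal.asIdeal '' S), (I : Ideal R)) →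
      ∀ z : R, y * z ∈ K := by
    intro y hy
    refine Submodule.iSup_induction (motive := fun y => ∀ z : R, y * z ∈ K) _ hy ?_ ?_ ?_
    · rintro ⟨J, ⟨I, hI, rfl⟩⟩ w hw z
      exact le_sSup (Set.mem_image_of_mem TwoSidedIdeal.asIdeal hI)
        (TwoSidedIdeal.mem_asIdeal.2 (I.mul_mem_right _ _ (TwoSidedIdeal.mem_asIdeal.1 hw)))
    · intro z
      show (0 : R) * z ∈ K
      simp
    · intro a b ha hb z
      show (a + b) * z ∈ K
      simpa [add_mul] using K.add_mem (ha z) (hb z)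
  have hmr : ∀ {y z : R}, y ∈ K → y * z ∈ K := by
    intro y z hy
    rw [hK, sSup_eq_iSup'] at hy
    exact key y hy z
  constructor
  · intro hx
    haveI : K.IsTwoSided := ⟨fun z hy => hmr hy⟩
    have hle : sSup S ≤ K.toTwoSided := by
      apply sSup_le
      intro I hI
      intro y hy
      exact Ideal.mem_toTwoSided.2 <|
        le_sSup (Set.mem_image_of_mem TwoSidedIdeal.asIdeal hI) (TwoSidedIdeal.mem_asIdeal.2 hy)
    exact Ideal.mem_toTwoSided.1 (hle hx)
  · intro hx
    have hle : K ≤ TwoSidedIdeal.asIdeal (sSup S) := by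
      apply sSup_le
      rintro J ⟨I, hI, rfl⟩
      exact TwoSidedIdeal.asIdeal.monotone' (le_sSup hI)
    exact TwoSidedIdeal.mem_asIdeal.1 (hle hx)

private lemma decompose_one_zero : DirectSum.decompose 𝒜 (1 : A) 0 = (1 : 𝒜 0) := by
  have h : ((1 : 𝒜 0) : A) = (1 : A) := rfl
  have := DirectSum.decompose_coe 𝒜 (1 : 𝒜 0)
  rw [h] at this
  rw [this, DirectSum.of_eq_same]

private lemma aux_sSup [IsLocalRing (𝒜 0)] {R : Type*} [Ring R] [Module R A]
    (S : Set (Submodule R A))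
    (hgr : ∀ I ∈ S, ∀ a ∈ I, ∀ γ : Γ, (DirectSum.decompose 𝒜 a γ : A) ∈ I)
    (hone : ∀ I ∈ S, ∀ x ∈ I, ∀ y : A, y * x = 1 → x * y = 1 → (1 : A) ∈ I)
    (hproper : ∀ I ∈ S, (1 : A) ∉ I) :
    (∀ a ∈ sSup S, ∀ γ : Γ, (DirectSum.decompose 𝒜 a γ : A) ∈ sSup S) ∧ (1 : A) ∉ sSup S := by
  constructor
  · intro a ha γ
    rw [sSup_eq_iSup'] at ha ⊢
    refine Submodule.iSup_induction
      (motive := fun a => ∀ γ : Γ, (DirectSum.decompose 𝒜 a γ : A) ∈ ⨆ I : S, (I : Submodule R A))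
      _ ha ?_ ?_ ?_ γ
    · rintro ⟨I, hI⟩ x hx
      intro δ
      exact le_iSup (fun I : S => (I : Submodule R A)) ⟨I, hI⟩ (hgr I hI x hx δ)
    · intro δ
      show (DirectSum.decompose 𝒜 (0 : A) δ : A) ∈ _
      simp
    · intro x y hx hy
      intro δ
      have hadd : (DirectSum.decompose 𝒜 (x + y) δ : A)
          = (DirectSum.decompose 𝒜 x δ : A) + (DirectSum.decompose 𝒜 y δ : A) := by
        rw [DirectSum.decompose_add, DirectSum.add_apply]; rfl
      rw [hadd]
      exact Submodule.add_mem _ (hx δ) (hy δ)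
  · intro hone'
    have key : ∀ a, a ∈ (⨆ I : S, (I : Submodule R A)) →
        NonUnit (DirectSum.decompose 𝒜 a 0) := by
      intro a ha
      refine Submodule.iSup_induction
        (motive := fun a => NonUnit (DirectSum.decompose 𝒜 a 0)) _ ha ?_ ?_ ?_
      · rintro ⟨I, hI⟩ x hx
        show NonUnit (DirectSum.decompose 𝒜 x 0)
        intro hun
        obtain ⟨y, hy1, hy2⟩ := exists_two_sided_inv (R := 𝒜 0) (fun h => h hun)
        have hmem : ((DirectSum.decompose 𝒜 x 0 : 𝒜 0) : A) ∈ I := hgr I hI x hx 0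
        have hy1' : (y : A) * ((DirectSum.decompose 𝒜 x 0 : 𝒜 0) : A) = 1 :=
          congrArg Subtype.val hy1
        have hy2' : ((DirectSum.decompose 𝒜 x 0 : 𝒜 0) : A) * (y : A) = 1 :=
          congrArg Subtype.val hy2
        exact hproper I hI (hone I hI _ hmem (y : A) hy1' hy2')
      · show NonUnit (DirectSum.decompose 𝒜 (0 : A) 0)
        rw [DirectSum.decompose_zero]
        exact nonUnit_zero
      · intro x y hx hy
        show NonUnit (DirectSum.decompose 𝒜 (x + y) 0)
        have hadd : DirectSum.decompose 𝒜 (x + y) 0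
            = DirectSum.decompose 𝒜 x 0 + DirectSum.decompose 𝒜 y 0 := by
          rw [DirectSum.decompose_add, DirectSum.add_apply]
        rw [hadd]
        exact nonUnit_add hx hy
    rw [sSup_eq_iSup'] at hone'
    have h1 := key 1 hone'
    rw [decompose_one_zero 𝒜] at h1
    exact not_nonUnit_one h1

/-- **Proposition 2.3(i)–(iii).** Let `Γ` be a cancellation monoid (written additively) and
`A` a `Γ`-graded ring whose degree-`0` part is a local ring in the classical sense.  Then
the sum `𝔏` of all proper graded left ideals of `A` is a proper graded left ideal, the sum
`ℜ` of all proper graded right ideals is a proper graded right ideal, and the sum `𝔐` of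
all proper graded two-sided ideals is a proper graded two-sided ideal. -/
theorem sSup_proper_graded_ideals_proper_graded [IsLocalRing (𝒜 0)] :
    (Ideal.IsGradedLeft 𝒜 (sSup {I : Ideal A | Ideal.IsGradedLeft 𝒜 I ∧ I ≠ ⊤}) ∧
      sSup {I : Ideal A | Ideal.IsGradedLeft 𝒜 I ∧ I ≠ ⊤} ≠ ⊤) ∧
    (Ideal.IsGradedRight 𝒜 (sSup {I : Submodule Aᵐᵒᵖ A | Ideal.IsGradedRight 𝒜 I ∧ I ≠ ⊤}) ∧
      sSup {I : Submodule Aᵐᵒᵖ A | Ideal.IsGradedRight 𝒜 I ∧ I ≠ ⊤} ≠ ⊤) ∧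
    (TwoSidedIdeal.IsGraded 𝒜 (sSup {I : TwoSidedIdeal A | TwoSidedIdeal.IsGraded 𝒜 I ∧ I ≠ ⊤}) ∧
      sSup {I : TwoSidedIdeal A | TwoSidedIdeal.IsGraded 𝒜 I ∧ I ≠ ⊤} ≠ ⊤) := by
  refine ⟨?_, ?_, ?_⟩
  · -- left ideals
    have h := aux_sSup 𝒜 {I : Ideal A | Ideal.IsGradedLeft 𝒜 I ∧ I ≠ ⊤}
      (fun I hI => hI.1)
      (fun I hI x hx y hy1 _ => by
        have := I.smul_mem y hx
        rwa [smul_eq_mul, hy1] at this)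
      (fun I hI h => hI.2 ((Ideal.eq_top_iff_one I).2 h))
    exact ⟨h.1, fun ht => h.2 (by rw [ht]; exact Submodule.mem_top)⟩
  · -- right ideals
    have h := aux_sSup 𝒜 {I : Submodule Aᵐᵒᵖ A | Ideal.IsGradedRight 𝒜 I ∧ I ≠ ⊤}
      (fun I hI => hI.1)
      (fun I hI x hx y _ hy2 => by
        have := I.smul_mem (MulOpposite.op y) hx
        rwa [op_smul_eq_mul, hy2] at this)
      (fun I hI h => hI.2 (by
        rw [Submodule.eq_top_iff']
        intro x
        have := I.smul_mem (MulOpposite.op x) h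
        rwa [op_smul_eq_mul, one_mul] at this))
    exact ⟨h.1, fun ht => h.2 (by rw [ht]; exact Submodule.mem_top)⟩
  · -- two-sided ideals
    set S := {I : TwoSidedIdeal A | TwoSidedIdeal.IsGraded 𝒜 I ∧ I ≠ ⊤} with hS
    have h := aux_sSup 𝒜 (TwoSidedIdeal.asIdeal '' S)
      (by rintro _ ⟨I, hI, rfl⟩ a ha γ
          exact TwoSidedIdeal.mem_asIdeal.2 (hI.1 a (TwoSidedIdeal.mem_asIdeal.1 ha) γ))
      (by rintro _ ⟨I, hI, rfl⟩ x hx y hy1 _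
          have := I.mul_mem_left y x (TwoSidedIdeal.mem_asIdeal.1 hx)
          rw [hy1] at this
          exact TwoSidedIdeal.mem_asIdeal.2 this)
      (by rintro _ ⟨I, hI, rfl⟩ h
          have h1 : (1 : A) ∈ I := TwoSidedIdeal.mem_asIdeal.1 h
          refine hI.2 (eq_top_iff.2 fun x _ => ?_)
          have := I.mul_mem_right 1 x h1
          rwa [one_mul] at this)
    refine ⟨?_, ?_⟩
    · intro a ha γ
      rw [twoSided_mem_sSup] at ha ⊢
      exact h.1 a ha γ
    · intro ht
      have h1 : (1 : A) ∈ sSup S := by rw [ht]; trivial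
      rw [twoSided_mem_sSup] at h1
      exact h.2 h1

end
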